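/- If C is a binary orthogonal array OA(N,n,2,t) attaining the Friedman bound with equality, i.e. N = 2^n (1 - n/(2(t+1))), then C is simple, C is an independent set in Q_n (no two elements of C differ in exactly one coordinate), and the pair (C, complement of C) is an equitable partition of Q_n with quotient matrix [[0, n],[2(t+1)-n, 2n-2(t+1)]]. -/

import Mathlib

namespace Friedman3

open Finset


def sgn : Fin 2 → ℝ := fun a => if a = 0 then 1 else -1

def chi {n : ℕ} (S : Finset (Fin n)) (x : Fin n → Fin 2) : ℝ := ∏ i ∈ S, sgn (x i)

def dlt {n : ℕ} (i : Fin n) : Fin n → Fin 2 := fun j => if j = i then 1 else 0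

lemma sgn_add (a b : Fin 2) : sgn (a + b) = sgn a * sgn b := by
  fin_cases a <;> fin_cases b <;> simp [sgn]

lemma sgn_zero : sgn 0 = 1 := rfl

lemma sgn_of_ne (a : Fin 2) (h : a ≠ 0) : sgn a = -1 := by
  fin_cases a
  · simp at h
  · rfl

lemma chi_add {n : ℕ} (S : Finset (Fin n)) (x y : Fin n → Fin 2) :
    chi S (x + y) = chi S x * chi S y := by
  simp only [chi, Pi.add_apply, sgn_add]
  rw [Finset.prod_mul_distrib]

lemma chi_zero {n : ℕ} (S : Finset (Fin n)) : chi S (0 : Fin n → Fin 2) = 1 := by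
  simp [chi, sgn_zero]

lemma sum_chi {n : ℕ} (z : Fin n → Fin 2) :
    ∑ S : Finset (Fin n), chi S z = if z = 0 then (2:ℝ)^n else 0 := by
  have h : ∏ i : Fin n, (sgn (z i) + 1) = ∑ S : Finset (Fin n), chi S z := by
    rw [Finset.prod_add]
    rw [Finset.powerset_univ]
    simp [chi]
  rw [← h]
  by_cases hz : z = 0
  · subst hz
    simp [sgn_zero]
    norm_num
  · rw [if_neg hz]
    obtain ⟨i, hi⟩ := Function.ne_iff.mp hz
    apply Finset.prod_eq_zero (Finset.mem_univ i)
    rw [sgn_of_ne _ hi]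
    ring

lemma fin2_add_eq_zero : ∀ a b : Fin 2, (a + b = 0) ↔ b = a := by decide

lemma add_eq_zero_iff {n : ℕ} (a b : Fin n → Fin 2) : a + b = 0 ↔ b = a := by
  simp only [funext_iff, Pi.add_apply, Pi.zero_apply, fin2_add_eq_zero]



lemma self_add {n : ℕ} (a : Fin n → Fin 2) : a + a = 0 :=
  funext fun i => by
    have : ∀ b : Fin 2, b + b = 0 := by decide
    exact this (a i)

lemma conv {n : ℕ} (fr : (Fin n → Fin 2) → ℝ) (z : Fin n → Fin 2) :
    ∑ S : Finset (Fin n), chi S z * (∑ x, fr x * chi S x)^2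
      = 2^n * ∑ x, fr x * fr (x + z) := by
  have step1 : ∀ S : Finset (Fin n), chi S z * (∑ x, fr x * chi S x)^2
      = ∑ x, ∑ y, fr x * fr y * chi S (z + (x + y)) := by
    intro S
    rw [sq, Finset.sum_mul_sum, Finset.mul_sum]
    refine Finset.sum_congr rfl fun x _ => ?_
    rw [Finset.mul_sum]
    refine Finset.sum_congr rfl fun y _ => ?_
    rw [chi_add, chi_add]; ring
  calc ∑ S : Finset (Fin n), chi S z * (∑ x, fr x * chi S x)^2
      = ∑ S : Finset (Fin n), ∑ x, ∑ y, fr x * fr y * chi S (z + (x + y)) :=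
        Finset.sum_congr rfl fun S _ => step1 S
    _ = ∑ x, ∑ y, ∑ S : Finset (Fin n), fr x * fr y * chi S (z + (x + y)) := by
        rw [Finset.sum_comm]
        exact Finset.sum_congr rfl fun x _ => Finset.sum_comm
    _ = ∑ x, ∑ y, fr x * fr y * (if z + (x + y) = 0 then (2:ℝ)^n else 0) := by
        refine Finset.sum_congr rfl fun x _ => Finset.sum_congr rfl fun y _ => ?_
        rw [← Finset.mul_sum, sum_chi]
    _ = 2^n * ∑ x, fr x * fr (x + z) := by
        rw [Finset.mul_sum]
        refine Finset.sum_congr rfl fun x _ => ?_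
        have hcond : ∀ y : Fin n → Fin 2, (z + (x + y) = 0) ↔ y = x + z := by
          intro y
          rw [add_eq_zero_iff]
          constructor
          · intro h
            have h2 : x + (x + y) = x + z := by rw [h]
            rwa [← add_assoc, self_add, zero_add] at h2
          · intro h
            rw [h, ← add_assoc, self_add, zero_add]
        simp only [hcond, mul_ite, mul_zero]
        rw [Finset.sum_ite_eq' Finset.univ (x + z) (fun y => fr x * fr y * 2^n)]
        simp [Finset.mem_univ]; ring
  
lemma inv_sum {n : ℕ} (fr : (Fin n → Fin 2) → ℝ) (v : Fin n → Fin 2) :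
    ∑ S : Finset (Fin n), (∑ x, fr x * chi S x) * chi S v = 2^n * fr v := by
  calc ∑ S : Finset (Fin n), (∑ x, fr x * chi S x) * chi S v
      = ∑ S : Finset (Fin n), ∑ x, fr x * chi S (x + v) := by
        refine Finset.sum_congr rfl fun S _ => ?_
        rw [Finset.sum_mul]
        exact Finset.sum_congr rfl fun x _ => by rw [chi_add]; ring
    _ = ∑ x, fr x * (if x + v = 0 then (2:ℝ)^n else 0) := by
        rw [Finset.sum_comm]
        exact Finset.sum_congr rfl fun x _ => by rw [← Finset.mul_sum, sum_chi]
    _ = 2^n * fr v := by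
        have hcond : ∀ x : Fin n → Fin 2, (x + v = 0) ↔ x = v := by
          intro x
          constructor
          · intro h
            have := (add_eq_zero_iff x v).mp h; rw [this]
          · intro h; rw [h]; exact (add_eq_zero_iff v v).mpr rfl
        simp only [hcond, mul_ite, mul_zero]
        rw [Finset.sum_ite_eq' Finset.univ v (fun x => fr x * 2^n)]
        simp [Finset.mem_univ]; ring



lemma chi_dlt {n : ℕ} (S : Finset (Fin n)) (i : Fin n) :
    chi S (dlt i) = if i ∈ S then (-1:ℝ) else 1 := by
  by_cases hi : i ∈ S
  · rw [if_pos hi]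
    rw [chi, Finset.prod_eq_single i]
    · simp [dlt, sgn]
    · intro j _ hj
      simp [dlt, hj, sgn]
    · exact fun h => absurd hi h
  · rw [if_neg hi, chi]
    apply Finset.prod_eq_one
    intro j hj
    have hji : j ≠ i := fun h => hi (h ▸ hj)
    simp [dlt, hji, sgn]

lemma sum_chi_dlt {n : ℕ} (S : Finset (Fin n)) :
    ∑ i : Fin n, chi S (dlt i) = (n : ℝ) - 2 * S.card := by
  simp only [chi_dlt]
  have h : ∀ i : Fin n, (if i ∈ S then (-1:ℝ) else 1) = 1 - 2 * (if i ∈ S then (1:ℝ) else 0) := by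
    intro i; split_ifs <;> ring
  rw [Finset.sum_congr rfl fun i _ => h i]
  rw [Finset.sum_sub_distrib, ← Finset.mul_sum, Finset.sum_boole]
  simp [Finset.filter_mem_eq_inter, Finset.card_univ]

lemma dist_dlt {n : ℕ} (v : Fin n → Fin 2) (i : Fin n) :
    hammingDist v (v + dlt i) = 1 := by
  have hset : Finset.univ.filter (fun j => v j ≠ (v + dlt i) j) = {i} := by
    ext j
    simp only [Finset.mem_filter, Finset.mem_univ, true_and, Finset.mem_singleton,
      Pi.add_apply, dlt]
    by_cases hji : j = i
    · subst hji
      simp only [if_pos rfl]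
      have : ∀ a : Fin 2, a ≠ a + 1 := by decide
      simp [this]
    · simp only [if_neg hji, hji, iff_false, add_zero]
      simp [hji]
  rw [hammingDist]
  rw [show ({j | v j ≠ (v + dlt i) j} : Finset (Fin n))
    = Finset.univ.filter (fun j => v j ≠ (v + dlt i) j) from rfl, hset]
  simp

lemma dlt_inj {n : ℕ} (v : Fin n → Fin 2) {i i' : Fin n}
    (h : v + dlt i = v + dlt i') : i = i' := by
  have h2 : dlt i = dlt i' := by
    funext j
    have := congrFun h j
    simpa using this
  have h3 := congrFun h2 i
  simp only [dlt, if_pos rfl] at h3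
  by_contra hne
  rw [if_neg hne] at h3
  exact absurd h3 (by decide)

lemma eq_add_dlt {n : ℕ} (v w : Fin n → Fin 2) (h : hammingDist v w = 1) :
    ∃ i : Fin n, w = v + dlt i := by
  rw [hammingDist, Finset.card_eq_one] at h
  obtain ⟨i, hi⟩ := h
  refine ⟨i, funext fun j => ?_⟩
  by_cases hji : j = i
  · subst hji
    have hj : j ∈ ({j | v j ≠ w j} : Finset (Fin n)) := by rw [hi]; exact Finset.mem_singleton_self j
    simp only [Finset.mem_filter] at hj
    have hne : v j ≠ w j := by simpa using hj
    have : ∀ a b : Fin 2, a ≠ b → b = a + 1 := by decide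
    simp [Pi.add_apply, dlt, this _ _ hne]
  · have hj : j ∉ ({j | v j ≠ w j} : Finset (Fin n)) := by rw [hi]; simpa using hji
    have heq : v j = w j := by
      by_contra hne
      exact hj (by simpa using hne)
    simp [Pi.add_apply, dlt, hji, ← heq]

lemma card_nbr {n : ℕ} (v : Fin n → Fin 2) (p : (Fin n → Fin 2) → Prop) [DecidablePred p] :
    (Finset.univ.filter fun w => p w ∧ hammingDist v w = 1).card
      = (Finset.univ.filter fun i : Fin n => p (v + dlt i)).card := by
  symm
  apply Finset.card_bij (fun i _ => v + dlt i)
  · intro i hi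
    simp only [Finset.mem_filter, Finset.mem_univ, true_and] at hi ⊢
    exact ⟨hi, dist_dlt v i⟩
  · intro i _ i' _ h
    exact dlt_inj v h
  · intro w hw
    simp only [Finset.mem_filter, Finset.mem_univ, true_and] at hw
    obtain ⟨i, hi⟩ := eq_add_dlt v w hw.2
    refine ⟨i, ?_, hi.symm⟩
    simp only [Finset.mem_filter, Finset.mem_univ, true_and]
    rw [← hi]; exact hw.1



lemma strength {n t N : ℕ} (f : (Fin n → Fin 2) → ℕ) (htn : t ≤ n)
    (hOA : ∀ s : Finset (Fin n), s.card = t → ∀ g : Fin n → Fin 2,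
      (∑ x ∈ Finset.univ.filter (fun x : Fin n → Fin 2 => ∀ i ∈ s, x i = g i), f x)
        * 2 ^ t = N)
    (S : Finset (Fin n)) (hS : S.Nonempty) (hSt : S.card ≤ t) :
    ∑ x, (f x : ℝ) * chi S x = 0 := by
  obtain ⟨s, hSs, _, hscard⟩ := Finset.exists_subsuperset_card_eq (Finset.subset_univ S)
    hSt (by rw [Finset.card_univ, Fintype.card_fin]; exact htn)
  classical
  set proj : (Fin n → Fin 2) → (Fin n → Fin 2) := fun x j => if j ∈ s then x j else 0 with hproj
  -- fiber decomposition
  have hfib := Finset.sum_fiberwise Finset.univ proj (fun x => (f x : ℝ) * chi S x)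
  -- value of each fiber times 2^t
  have hfibval : ∀ g : Fin n → Fin 2,
      (∑ x ∈ Finset.univ.filter (fun x => proj x = g), (f x : ℝ) * chi S x) * 2^t
        = if proj g = g then (N : ℝ) * chi S g else 0 := by
    intro g
    by_cases hg : proj g = g
    · rw [if_pos hg]
      have hsetseq : Finset.univ.filter (fun x => proj x = g)
          = Finset.univ.filter (fun x : Fin n → Fin 2 => ∀ i ∈ s, x i = g i) := by
        ext x
        simp only [Finset.mem_filter, Finset.mem_univ, true_and]
        constructor
        · intro h i hi
          have := congrFun h i
          simpa [hproj, if_pos hi] using this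
        · intro h
          funext j
          by_cases hj : j ∈ s
          · simpa [hproj, if_pos hj] using h j hj
          · have := congrFun hg j
            simp only [hproj, if_neg hj] at this ⊢
            exact this
      have hchi : ∀ x ∈ Finset.univ.filter (fun x : Fin n → Fin 2 => ∀ i ∈ s, x i = g i),
          (f x : ℝ) * chi S x = (f x : ℝ) * chi S g := by
        intro x hx
        simp only [Finset.mem_filter, Finset.mem_univ, true_and] at hx
        congr 1
        exact Finset.prod_congr rfl fun i hi => by rw [hx i (hSs hi)]
      rw [hsetseq, Finset.sum_congr rfl hchi, ← Finset.sum_mul]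
      have hcast : ((∑ x ∈ Finset.univ.filter
          (fun x : Fin n → Fin 2 => ∀ i ∈ s, x i = g i), f x : ℕ) : ℝ) * 2^t = N := by
        have := hOA s hscard g
        exact_mod_cast congrArg (Nat.cast : ℕ → ℝ) this
      push_cast at hcast
      linear_combination chi S g * hcast
    · rw [if_neg hg]
      have : Finset.univ.filter (fun x => proj x = g) = ∅ := by
        rw [Finset.filter_eq_empty_iff]
        intro x _ hx
        apply hg
        have hidem : proj (proj x) = proj x := by
          funext j; by_cases hj : j ∈ s <;> simp [hproj, hj]
        rw [← hx, hidem]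
      rw [this]
      simp
  -- sum over fixed points of proj of chi is zero, by involution
  obtain ⟨i0, hi0⟩ := hS
  have hi0s : i0 ∈ s := hSs hi0
  have hinvol : ∑ g ∈ Finset.univ.filter (fun g => proj g = g), (N : ℝ) * chi S g = 0 := by
    apply Finset.sum_involution (fun g _ => g + dlt i0)
    · intro g _
      rw [chi_add, chi_dlt, if_pos hi0]
      ring
    · intro g _ _
      intro h
      have := congrFun h i0
      simp only [Pi.add_apply, dlt, if_pos rfl] at this
      exact absurd this (by
        have : ∀ a : Fin 2, a + 1 ≠ a := by decide
        exact this _)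
    · intro g hg
      simp only [Finset.mem_filter, Finset.mem_univ, true_and] at hg ⊢
      funext j
      by_cases hj : j ∈ s
      · simp [hproj, hj]
      · have hji0 : j ≠ i0 := fun h => hj (h ▸ hi0s)
        have hgj : g j = 0 := by
          have := congrFun hg j
          simpa [hproj, hj] using this.symm
        simp [hproj, hj, Pi.add_apply, dlt, hji0, hgj]
    · intro g _
      funext j
      simp only [Pi.add_apply]
      rw [add_assoc]
      have : dlt (n := n) i0 j + dlt i0 j = 0 := congrFun (self_add (dlt i0)) j
      rw [this, add_zero]
  -- put it together
  have htotal2 : (∑ x, (f x : ℝ) * chi S x) * 2^t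
      = ∑ g : Fin n → Fin 2, (∑ x ∈ Finset.univ.filter (fun x => proj x = g),
          (f x : ℝ) * chi S x) * 2^t := by
    rw [← Finset.sum_mul, hfib]
  rw [Finset.sum_congr rfl (fun g _ => hfibval g)] at htotal2
  rw [← Finset.sum_filter, hinvol] at htotal2
  have h2t : (2:ℝ)^t ≠ 0 := by positivity
  exact (mul_eq_zero.mp htotal2).resolve_right h2t

end Friedman3

open Friedman3 in
set_option maxHeartbeats 2000000 in
/-- An orthogonal array attaining the Friedman bound with equality is simple,
is an independent set in Q_n, and forms with its complement an equitable partition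
with quotient matrix [[0,n],[2(t+1)-n, 2n-2(t+1)]]. -/
theorem stmt_3 (n t N : ℕ) (f : (Fin n → Fin 2) → ℕ)
    (htn : t ≤ n)
    (htotal : ∑ x : Fin n → Fin 2, f x = N)
    (hOA : ∀ s : Finset (Fin n), s.card = t → ∀ g : Fin n → Fin 2,
      (∑ x ∈ Finset.univ.filter (fun x : Fin n → Fin 2 => ∀ i ∈ s, x i = g i), f x)
        * 2 ^ t = N)
    (heq : (N : ℝ) = 2 ^ n * (1 - n / (2 * (t + 1)))) :
    (∀ x, f x ≤ 1) ∧
    (∀ x y : Fin n → Fin 2, f x = 1 → f y = 1 → hammingDist x y ≠ 1) ∧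
    (∀ v : Fin n → Fin 2, f v = 1 →
      (Finset.univ.filter (fun w : Fin n → Fin 2 => f w = 1 ∧ hammingDist v w = 1)).card = 0 ∧
      (Finset.univ.filter (fun w : Fin n → Fin 2 => f w = 0 ∧ hammingDist v w = 1)).card = n) ∧
    (∀ v : Fin n → Fin 2, f v = 0 →
      ((Finset.univ.filter (fun w : Fin n → Fin 2 => f w = 1 ∧ hammingDist v w = 1)).card : ℤ)
        = 2 * (t + 1) - n ∧
      ((Finset.univ.filter (fun w : Fin n → Fin 2 => f w = 0 ∧ hammingDist v w = 1)).card : ℤ)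
        = 2 * n - 2 * (t + 1)) := by
  classical
  set fr : (Fin n → Fin 2) → ℝ := fun x => (f x : ℝ) with hfr
  have hfrnn : ∀ x, 0 ≤ fr x := fun x => by rw [hfr]; positivity
  have hP : (0:ℝ) < 2^n := by positivity
  have hN : ∑ x, fr x = (N:ℝ) := by
    have := congrArg (fun k : ℕ => (k:ℝ)) htotal
    push_cast at this
    exact this
  set Fc : Finset (Fin n) → ℝ := fun S => ∑ x, fr x * chi S x with hFc
  have hF0 : Fc ∅ = (N:ℝ) := by
    simp only [hFc, chi, Finset.prod_empty, mul_one]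
    exact hN
  set Q : ℝ := ∑ x, fr x ^ 2 with hQ
  set B : ℝ := ∑ x, fr x * (∑ i, fr (x + dlt i)) with hB
  set T : Finset (Finset (Fin n)) := Finset.univ.erase ∅ with hT
  set R : ℝ := ∑ S ∈ T, (Fc S)^2 with hR
  set E : ℝ := ∑ S ∈ T, ((n:ℝ) - 2*S.card) * (Fc S)^2 with hE
  -- Parseval
  have h_pars : ∑ S : Finset (Fin n), (Fc S)^2 = 2^n * Q := by
    have h := conv fr 0
    simp only [chi_zero, one_mul, add_zero] at h
    have h2 : ∑ x, fr x * fr x = ∑ x, fr x^2 :=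
      Finset.sum_congr rfl fun x _ => (sq (fr x)).symm
    simp only [hFc, hQ]
    rw [← h2]
    exact h
  -- Edge identity
  have h_edge : ∑ S : Finset (Fin n), ((n:ℝ) - 2*S.card) * (Fc S)^2 = 2^n * B := by
    calc ∑ S : Finset (Fin n), ((n:ℝ) - 2*S.card) * (Fc S)^2
        = ∑ S : Finset (Fin n), ∑ i : Fin n, chi S (dlt i) * (Fc S)^2 := by
          refine Finset.sum_congr rfl fun S _ => ?_
          rw [← Finset.sum_mul, sum_chi_dlt]
      _ = ∑ i : Fin n, ∑ S : Finset (Fin n), chi S (dlt i) * (Fc S)^2 := Finset.sum_comm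
      _ = ∑ i : Fin n, 2^n * ∑ x, fr x * fr (x + dlt i) := by
          refine Finset.sum_congr rfl fun i _ => ?_
          simp only [hFc]
          exact conv fr (dlt i)
      _ = 2^n * ∑ i : Fin n, ∑ x, fr x * fr (x + dlt i) := by rw [Finset.mul_sum]
      _ = 2^n * B := by
          rw [hB, Finset.sum_comm]
          congr 1
          exact Finset.sum_congr rfl fun x _ => by rw [Finset.mul_sum]
  -- splits at ∅
  have hsplit1 : (N:ℝ)^2 + R = 2^n * Q := by
    rw [← h_pars, hR, hT,
      ← Finset.add_sum_erase _ (fun S => (Fc S)^2) (Finset.mem_univ (∅ : Finset (Fin n))), hF0]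
  have hsplit2 : (n:ℝ)*N^2 + E = 2^n * B := by
    rw [← h_edge, hE, hT,
      ← Finset.add_sum_erase _ (fun S => ((n:ℝ) - 2*S.card) * (Fc S)^2)
      (Finset.mem_univ (∅ : Finset (Fin n))), hF0]
    simp
  -- key numeric identity
  have h8 : 2*((t:ℝ)+1) * N = 2^n * (2*((t:ℝ)+1) - n) := by
    have hne : ((t:ℝ)+1) ≠ 0 := by positivity
    rw [heq]
    field_simp
  have hlam : (0:ℝ) ≤ 2*((t:ℝ)+1) - n := by
    by_contra h
    push_neg at h
    have h1 : 2*((t:ℝ)+1)*N < 0 := by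
      rw [h8]
      exact mul_neg_of_pos_of_neg hP h
    have h2 : (0:ℝ) ≤ 2*((t:ℝ)+1)*N := by positivity
    linarith only [h1, h2]
  -- strength
  have hFs : ∀ S ∈ T, S.card ≤ t → Fc S = 0 := by
    intro S hS hc
    have hne : S ≠ ∅ := (Finset.mem_erase.mp hS).1
    have := strength f htn hOA S (Finset.nonempty_iff_ne_empty.mpr hne) hc
    simpa [hFc, hfr] using this
  -- basic inequalities
  have hQN : (N:ℝ) ≤ Q := by
    rw [← hN, hQ]
    refine Finset.sum_le_sum fun x _ => ?_
    have hx : (f x : ℝ) ≤ (f x : ℝ)^2 := by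
      exact_mod_cast Nat.le_self_pow (by norm_num) (f x)
    simpa [hfr] using hx
  have hB0 : (0:ℝ) ≤ B := by
    rw [hB]
    refine Finset.sum_nonneg fun x _ => mul_nonneg (hfrnn x) ?_
    exact Finset.sum_nonneg fun i _ => hfrnn _
  have h9 : ∀ S ∈ T, ((n:ℝ) - 2*S.card) * (Fc S)^2 ≤ -(2*((t:ℝ)+1) - n) * (Fc S)^2 := by
    intro S hS
    by_cases hc : S.card ≤ t
    · rw [hFs S hS hc]
      simp
    · push_neg at hc
      have hcard : (t:ℝ) + 1 ≤ S.card := by exact_mod_cast hc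
      have hco : (n:ℝ) - 2*S.card ≤ -(2*((t:ℝ)+1) - n) := by linarith only [hcard]
      exact mul_le_mul_of_nonneg_right hco (sq_nonneg _)
  have hElam : E ≤ -(2*((t:ℝ)+1) - n) * R := by
    rw [hE, hR, Finset.mul_sum]
    exact Finset.sum_le_sum h9
  have hRge : 2^n * (N:ℝ) - N^2 ≤ R := by
    have := mul_le_mul_of_nonneg_left hQN hP.le
    linarith only [this, hsplit1]
  have hlamRge : (n:ℝ)*N^2 ≤ (2*((t:ℝ)+1) - n) * R := by
    have h1 : (2*((t:ℝ)+1) - n) * (2^n*(N:ℝ) - N^2) ≤ (2*((t:ℝ)+1) - n) * R :=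
      mul_le_mul_of_nonneg_left hRge hlam
    have h2 : (2*((t:ℝ)+1) - n) * (2^n*(N:ℝ) - N^2) = n * (N:ℝ)^2 := by
      linear_combination -(N:ℝ) * h8
    linarith only [h1, h2]
  have hchain : (2:ℝ)^n * B ≤ 0 := by linarith only [hsplit2, hElam, hlamRge]
  have hPB : (2:ℝ)^n * B = 0 := le_antisymm hchain (mul_nonneg hP.le hB0)
  have hEeq : E = -((n:ℝ)*N^2) := by linarith only [hsplit2, hPB]
  have hlamReq : (2*((t:ℝ)+1) - n) * R = (n:ℝ)*N^2 :=
    le_antisymm (by linarith only [hElam, hEeq]) hlamRge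
  -- simplicity
  have hQeq : Q = (N:ℝ) := by
    rcases Nat.eq_zero_or_pos N with hN0 | hNpos
    · have hf0 : ∀ x, f x = 0 := by
        intro x
        rw [hN0] at htotal
        exact Finset.sum_eq_zero_iff.mp htotal x (Finset.mem_univ x)
      rw [hQ, hN0]
      simp [hfr, hf0]
    · have hlampos : (0:ℝ) < 2*((t:ℝ)+1) - n := by
        by_contra h
        push_neg at h
        have h0 : (2*((t:ℝ)+1) - n) = 0 := le_antisymm h hlam
        have : 2*((t:ℝ)+1)*N = 0 := by rw [h8, h0]; ring
        have hNr : (0:ℝ) < N := by exact_mod_cast hNpos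
        have hpos : (0:ℝ) < 2*((t:ℝ)+1)*N := by positivity
        linarith only [hpos, this]
      have h1 : (2*((t:ℝ)+1) - n) * (2^n*(N:ℝ) - N^2) = n * (N:ℝ)^2 := by
        linear_combination -(N:ℝ) * h8
      have h2 : (2*((t:ℝ)+1) - n) * (2^n * Q - N^2) = n * (N:ℝ)^2 := by
        linear_combination hlamReq - (2*((t:ℝ)+1) - (n:ℝ)) * hsplit1
      have h3 : (2*((t:ℝ)+1) - n) * (2:ℝ)^n * (Q - N) = 0 := by
        linear_combination h2 - h1
      rcases mul_eq_zero.mp h3 with h4 | h4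
      · exact absurd h4 (ne_of_gt (mul_pos hlampos hP))
      · linarith only [h4]
  -- simplicity
  have hsimple : ∀ x, f x ≤ 1 := by
    have hsum : ∑ x, fr x = ∑ x, fr x ^ 2 := by rw [hN, ← hQ, hQeq]
    have hptle : ∀ x ∈ Finset.univ, fr x ≤ fr x ^ 2 := by
      intro x _
      have hx : (f x : ℝ) ≤ (f x : ℝ)^2 := by
        exact_mod_cast Nat.le_self_pow (by norm_num) (f x)
      simpa [hfr] using hx
    have hpt := (Finset.sum_eq_sum_iff_of_le hptle).mp hsum
    intro x
    have hx := hpt x (Finset.mem_univ x)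
    have hx2 : (f x : ℝ) = (f x : ℝ)^2 := by simpa [hfr] using hx
    have hx3 : f x = f x ^ 2 := by exact_mod_cast hx2
    nlinarith [hx3]
  -- support of the spectrum
  have hsupp : ∀ S ∈ T, ((n:ℝ) - 2*S.card) * Fc S = -(2*((t:ℝ)+1) - n) * Fc S := by
    have hzero : ∑ S ∈ T, (((n:ℝ) - 2*S.card) + (2*((t:ℝ)+1) - n)) * (Fc S)^2 = 0 := by
      have hsum : ∑ S ∈ T, (((n:ℝ) - 2*S.card) + (2*((t:ℝ)+1) - n)) * (Fc S)^2
          = E + (2*((t:ℝ)+1) - n) * R := by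
        rw [hE, hR, Finset.mul_sum, ← Finset.sum_add_distrib]
        exact Finset.sum_congr rfl fun S _ => by ring
      rw [hsum, hEeq, hlamReq]
      ring
    have hnp : ∀ S ∈ T, (((n:ℝ) - 2*S.card) + (2*((t:ℝ)+1) - n)) * (Fc S)^2 ≤ 0 := by
      intro S hS
      have := h9 S hS
      linarith only [this]
    have hterm := (Finset.sum_eq_zero_iff_of_nonpos hnp).mp hzero
    intro S hS
    have h0 := hterm S hS
    rcases mul_eq_zero.mp h0 with h | h
    · linear_combination (Fc S) * h
    · have hfz : Fc S = 0 := sq_eq_zero_iff.mp h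
      rw [hfz]
      ring
  -- the local degree identity
  have hinv : ∀ w, ∑ S : Finset (Fin n), Fc S * chi S w = 2^n * fr w := by
    intro w
    simp only [hFc]
    exact inv_sum fr w
  have hAv : ∀ v, ∑ i, fr (v + dlt i) = (2*((t:ℝ)+1) - n) * (1 - fr v) := by
    intro v
    have key : (2:ℝ)^n * (∑ i, fr (v + dlt i))
        = 2^n * ((2*((t:ℝ)+1) - n) * (1 - fr v)) := by
      have hstep : (2:ℝ)^n * (∑ i, fr (v + dlt i))
          = ∑ S : Finset (Fin n), ((n:ℝ) - 2*S.card) * Fc S * chi S v := by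
        calc (2:ℝ)^n * (∑ i, fr (v + dlt i))
            = ∑ i : Fin n, 2^n * fr (v + dlt i) := Finset.mul_sum _ _ _
          _ = ∑ i : Fin n, ∑ S : Finset (Fin n), Fc S * chi S (v + dlt i) :=
              Finset.sum_congr rfl fun i _ => (hinv (v + dlt i)).symm
          _ = ∑ S : Finset (Fin n), ∑ i : Fin n, Fc S * chi S (v + dlt i) := Finset.sum_comm
          _ = ∑ S : Finset (Fin n), ((n:ℝ) - 2*S.card) * Fc S * chi S v := by
              refine Finset.sum_congr rfl fun S _ => ?_
              calc ∑ i : Fin n, Fc S * chi S (v + dlt i)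
                  = ∑ i : Fin n, (Fc S * chi S v) * chi S (dlt i) := by
                    refine Finset.sum_congr rfl fun i _ => ?_
                    rw [chi_add]
                    ring
                _ = (Fc S * chi S v) * ∑ i : Fin n, chi S (dlt i) := by
                    rw [← Finset.mul_sum]
                _ = ((n:ℝ) - 2*S.card) * Fc S * chi S v := by
                    rw [sum_chi_dlt]
                    ring
      have hsplit3 : ∑ S : Finset (Fin n), ((n:ℝ) - 2*S.card) * Fc S * chi S v
          = (n:ℝ) * N + ∑ S ∈ T, ((n:ℝ) - 2*S.card) * Fc S * chi S v := by
        rw [hT, ← Finset.add_sum_erase _ (fun S => ((n:ℝ) - 2*S.card) * Fc S * chi S v)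
          (Finset.mem_univ (∅ : Finset (Fin n))), hF0]
        simp [chi, Finset.prod_empty]
      have hTsum : ∑ S ∈ T, ((n:ℝ) - 2*S.card) * Fc S * chi S v
          = -(2*((t:ℝ)+1) - n) * (∑ S ∈ T, Fc S * chi S v) := by
        rw [Finset.mul_sum]
        refine Finset.sum_congr rfl fun S hS => ?_
        have := hsupp S hS
        calc ((n:ℝ) - 2*S.card) * Fc S * chi S v
            = (((n:ℝ) - 2*S.card) * Fc S) * chi S v := by ring
          _ = (-(2*((t:ℝ)+1) - n) * Fc S) * chi S v := by rw [this]
          _ = -(2*((t:ℝ)+1) - n) * (Fc S * chi S v) := by ring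
      have hTsum2 : ∑ S ∈ T, Fc S * chi S v = 2^n * fr v - N := by
        have h1 : Fc ∅ * chi ∅ v + ∑ S ∈ T, Fc S * chi S v
            = ∑ S : Finset (Fin n), Fc S * chi S v := by
          rw [hT]
          exact Finset.add_sum_erase _ (fun S => Fc S * chi S v)
            (Finset.mem_univ (∅ : Finset (Fin n)))
        rw [hinv v, hF0] at h1
        have hchie : chi (∅ : Finset (Fin n)) v = 1 := by simp [chi]
        rw [hchie, mul_one] at h1
        linarith only [h1]
      rw [hstep, hsplit3, hTsum, hTsum2]
      linear_combination h8
    have h2n : ((2:ℝ)^n) ≠ 0 := ne_of_gt hP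
    exact mul_left_cancel₀ h2n key
  -- counting
  have hfr01 : ∀ x, (if f x = 1 then (1:ℝ) else 0) = fr x := by
    intro x
    have := hsimple x
    interval_cases h : f x <;> simp [hfr, h]
  have hk1 : ∀ v, ((Finset.univ.filter
      (fun w : Fin n → Fin 2 => f w = 1 ∧ hammingDist v w = 1)).card : ℝ)
      = ∑ i, fr (v + dlt i) := by
    intro v
    rw [card_nbr v (fun w => f w = 1)]
    rw [← Finset.sum_boole]
    exact Finset.sum_congr rfl fun i _ => hfr01 (v + dlt i)
  have hntot : ∀ v : Fin n → Fin 2,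
      (Finset.univ.filter (fun w : Fin n → Fin 2 => f w = 1 ∧ hammingDist v w = 1)).card
      + (Finset.univ.filter (fun w : Fin n → Fin 2 => f w = 0 ∧ hammingDist v w = 1)).card
      = n := by
    intro v
    rw [card_nbr v (fun w => f w = 1), card_nbr v (fun w => f w = 0)]
    have hcongr : Finset.univ.filter (fun i : Fin n => f (v + dlt i) = 0)
        = Finset.univ.filter (fun i : Fin n => ¬ (f (v + dlt i) = 1)) := by
      refine Finset.filter_congr fun i _ => ?_
      have := hsimple (v + dlt i)
      omega
    rw [hcongr, Finset.card_filter_add_card_filter_not]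
    simp
  -- the four conclusions
  have hcase1 : ∀ v : Fin n → Fin 2, f v = 1 →
      (Finset.univ.filter (fun w : Fin n → Fin 2 => f w = 1 ∧ hammingDist v w = 1)).card = 0 := by
    intro v hv
    have hfrv : fr v = 1 := by simp [hfr, hv]
    have h1 := hk1 v
    rw [hAv v, hfrv] at h1
    have h2 : ((Finset.univ.filter
        (fun w : Fin n → Fin 2 => f w = 1 ∧ hammingDist v w = 1)).card : ℝ) = 0 := by
      rw [h1]; ring
    exact_mod_cast h2
  refine ⟨hsimple, ?_, ?_, ?_⟩
  · intro x y hx hy hd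
    have h0 := hcase1 x hx
    rw [Finset.card_eq_zero] at h0
    have hyin : y ∈ Finset.univ.filter
        (fun w : Fin n → Fin 2 => f w = 1 ∧ hammingDist x w = 1) := by
      simp only [Finset.mem_filter, Finset.mem_univ, true_and]
      exact ⟨hy, hd⟩
    rw [h0] at hyin
    exact absurd hyin (Finset.notMem_empty y)
  · intro v hv
    have h0 := hcase1 v hv
    refine ⟨h0, ?_⟩
    have h1 := hntot v
    omega
  · intro v hv
    have hfrv : fr v = 0 := by simp [hfr, hv]
    have h1 := hk1 v
    rw [hAv v, hfrv] at h1
    have hg1 : ((Finset.univ.filter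
        (fun w : Fin n → Fin 2 => f w = 1 ∧ hammingDist v w = 1)).card : ℤ)
        = 2 * ((t:ℤ) + 1) - n := by
      have h2 : (((Finset.univ.filter
          (fun w : Fin n → Fin 2 => f w = 1 ∧ hammingDist v w = 1)).card : ℤ) : ℝ)
          = ((2 * ((t:ℤ) + 1) - n : ℤ) : ℝ) := by
        push_cast
        linarith only [h1]
      exact_mod_cast h2
    have hnt := hntot v
    constructor
    · exact_mod_cast hg1
    · omega
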